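/- Fix n ≥ 1, γ ∈ ℝ^{k+1}, and M > 0. Let x_1, x_2, … ∈ ℝ^k be a sequence of covariate vectors with ‖x_i‖ ≤ M for all i, and for each m > n form the pseudo-absence logistic log-likelihood l_bin(γ; m) from the points 1, …, m. Then l_bin(γ; m) → −∞ as m → ∞; more precisely, there is a constant C such that l_bin(γ; m) ≤ −n log m + C for all sufficiently large m. -/

import Mathlib

open Real Finset Filter

noncomputable section

/-- The intensity `λ_i(β) = exp(β_0 + Σ_{j=1}^k x_{ij} β_j)`. -/
def lam {k : ℕ} (x : ℕ → Fin k → ℝ) (β : Fin (k + 1) → ℝ) (i : ℕ) : ℝ :=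
  Real.exp (β 0 + ∑ j : Fin k, x i j * β j.succ)

/-- The weighted Poisson point-process log-likelihood
`l_ppm(β; w) = Σ_{i=1}^n log λ_i(β) − Σ_{i=1}^m w_i λ_i(β)`
(points are indexed `0, …, m-1`, the presences being `0, …, n-1`). -/
def lppm {k : ℕ} (n m : ℕ) (x : ℕ → Fin k → ℝ) (w : ℕ → ℝ) (β : Fin (k + 1) → ℝ) : ℝ :=
  (∑ i ∈ Finset.range n, Real.log (lam x β i)) - ∑ i ∈ Finset.range m, w i * lam x β i

/-- The vector `J_c = (log c, 0, …, 0) ∈ ℝ^{k+1}`. -/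
def Jvec {k : ℕ} (c : ℝ) : Fin (k + 1) → ℝ := fun j => if j = 0 then Real.log c else 0


/-- With covariates bounded in norm by `M`, the pseudo-absence logistic log-likelihood
`l_bin(γ; m) = Σ_{i=1}^n log p_i + Σ_{i=n+1}^m log(1 − p_i)` diverges to `−∞` as
`m → ∞`; more precisely there is a constant `C` with
`l_bin(γ; m) ≤ −n log m + C` for all sufficiently large `m`. -/
theorem stmt_8 {k : ℕ} (n : ℕ) (hn : 1 ≤ n) (γ : Fin (k + 1) → ℝ) (M : ℝ) (hM : 0 < M)
    (x : ℕ → Fin k → ℝ) (hx : ∀ i, ‖x i‖ ≤ M)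
    (p : ℕ → ℕ → ℝ)
    (hp01 : ∀ m, n < m → ∀ i < m, p m i ∈ Set.Ioo (0 : ℝ) 1)
    (hlogit : ∀ m, n < m → ∀ i < m,
      Real.log (p m i / (1 - p m i)) =
        γ 0 - Real.log ((m : ℝ) - n) + ∑ j : Fin k, x i j * γ j.succ) :
    Filter.Tendsto
        (fun m : ℕ =>
          (∑ i ∈ Finset.range n, Real.log (p m i)) +
            ∑ i ∈ Finset.Ico n m, Real.log (1 - p m i))
        Filter.atTop Filter.atBot ∧
      ∃ C : ℝ, ∀ᶠ m : ℕ in Filter.atTop,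
        (∑ i ∈ Finset.range n, Real.log (p m i)) +
            ∑ i ∈ Finset.Ico n m, Real.log (1 - p m i) ≤
          -(n : ℝ) * Real.log m + C := by

  set S : ℕ → ℝ := fun i => γ 0 + ∑ j : Fin k, x i j * γ j.succ with hS
  set C : ℝ := (∑ i ∈ Finset.range n, S i) + n * Real.log 2 with hC
  have key : ∀ m : ℕ, n < m → 2 * n ≤ m →
      (∑ i ∈ Finset.range n, Real.log (p m i)) +
        ∑ i ∈ Finset.Ico n m, Real.log (1 - p m i) ≤ -(n : ℝ) * Real.log m + C := by
    intro m hnm h2n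
    have hm0 : (0:ℝ) < m := by exact_mod_cast lt_of_le_of_lt (Nat.zero_le n) hnm
    have hsum2 : (∑ i ∈ Finset.Ico n m, Real.log (1 - p m i)) ≤ 0 := by
      apply Finset.sum_nonpos
      intro i hi
      have hi' := (Finset.mem_Ico.mp hi).2
      obtain ⟨h0, h1⟩ := hp01 m hnm i hi'
      exact Real.log_nonpos (by linarith) (by linarith)
    have hsum1 : (∑ i ∈ Finset.range n, Real.log (p m i)) ≤
        ∑ i ∈ Finset.range n, (S i - Real.log ((m : ℝ) - n)) := by
      apply Finset.sum_le_sum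
      intro i hi
      have hin : i < m := lt_trans (Finset.mem_range.mp hi) hnm
      obtain ⟨h0, h1⟩ := hp01 m hnm i hin
      have hle : p m i ≤ p m i / (1 - p m i) := by
        rw [le_div_iff₀ (by linarith)]
        nlinarith
      have := Real.log_le_log h0 hle
      rw [hlogit m hnm i hin] at this
      calc Real.log (p m i) ≤ γ 0 - Real.log ((m : ℝ) - n) + ∑ j : Fin k, x i j * γ j.succ := this
        _ = S i - Real.log ((m : ℝ) - n) := by simp [hS]; ring
    have hlogmn : Real.log m - Real.log 2 ≤ Real.log ((m : ℝ) - n) := by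
      have h2 : (m : ℝ) / 2 ≤ (m : ℝ) - n := by
        have : (2 * n : ℝ) ≤ m := by exact_mod_cast h2n
        linarith
      have := Real.log_le_log (by positivity) h2
      rwa [Real.log_div (by positivity) (by norm_num)] at this
    have hsum1' : (∑ i ∈ Finset.range n, (S i - Real.log ((m : ℝ) - n)))
        = (∑ i ∈ Finset.range n, S i) - n * Real.log ((m : ℝ) - n) := by
      rw [Finset.sum_sub_distrib, Finset.sum_const, Finset.card_range]
      simp [nsmul_eq_mul]
    have hn0 : (0:ℝ) ≤ (n:ℝ) := Nat.cast_nonneg n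
    have := mul_le_mul_of_nonneg_left hlogmn hn0
    calc (∑ i ∈ Finset.range n, Real.log (p m i)) +
          ∑ i ∈ Finset.Ico n m, Real.log (1 - p m i)
        ≤ (∑ i ∈ Finset.range n, S i) - n * Real.log ((m : ℝ) - n) := by
          rw [← hsum1']; linarith
      _ ≤ -(n : ℝ) * Real.log m + C := by
          simp only [hC]; nlinarith
  have hev : ∀ᶠ m : ℕ in Filter.atTop,
      (∑ i ∈ Finset.range n, Real.log (p m i)) +
        ∑ i ∈ Finset.Ico n m, Real.log (1 - p m i) ≤ -(n : ℝ) * Real.log m + C := by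
    filter_upwards [Filter.eventually_ge_atTop (2 * n + 1)] with m hm
    exact key m (by omega) (by omega)
  have htend : Filter.Tendsto (fun m : ℕ => -(n : ℝ) * Real.log m + C) Filter.atTop Filter.atBot := by
    apply tendsto_atBot_add_const_right
    apply Filter.Tendsto.const_mul_atTop_of_neg (neg_lt_zero.mpr (by exact_mod_cast hn) : -(n:ℝ) < 0)
    exact Real.tendsto_log_atTop.comp tendsto_natCast_atTop_atTop
  exact ⟨tendsto_atBot_mono' _ hev htend, ⟨C, hev⟩⟩
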